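/- Let Q and R be inverse quantal frames and X a Q-R-bimodule which is a frame, is a Q-sheaf with respect to its left Q-action, carries a right R-action preserving arbitrary joins in each variable that satisfies the right anchor condition xc = (1_X·c) ∧ x for all c ∈ R₀, commutes with the left action ((ax)r = a(xr)), and is open as a right R-locale, i.e., admits a monotone map ς' : X → R₀ with ς'(xc) = ς'(x) ∧ c and x·ς'(x) = x for all x ∈ X, c ∈ R₀. Assume moreover the invariance identities (which hold whenever X arises from a bi-action of étale groupoids): ς'(ax) = ς'(ς_Q(a*)x) for all a ∈ Q, x ∈ X, and ς_X(xr) = ς_X(x·ς_R(r)) for all r ∈ R, x ∈ X. Then for all r ∈ R and all x, y ∈ X one has ⟨xr*, y⟩ = ⟨x, yr⟩. -/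

import Mathlib

/-- A unital involutive quantale: a complete lattice with an associative
multiplication preserving arbitrary joins in each variable, a unit `e`, and a
join-preserving involution. -/
structure QuantaleStr (Q : Type*) [CompleteLattice Q] where
  mul : Q → Q → Q
  e : Q
  star : Q → Q
  mul_assoc : ∀ a b c, mul (mul a b) c = mul a (mul b c)
  sSup_mul : ∀ (S : Set Q) (b : Q), mul (sSup S) b = ⨆ a ∈ S, mul a b
  mul_sSup : ∀ (a : Q) (S : Set Q), mul a (sSup S) = ⨆ b ∈ S, mul a b
  e_mul : ∀ a, mul e a = a
  mul_e : ∀ a, mul a e = a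
  star_star : ∀ a, star (star a) = a
  star_mul : ∀ a b, star (mul a b) = mul (star b) (star a)
  star_sSup : ∀ S : Set Q, star (sSup S) = ⨆ a ∈ S, star a

/-- The set of partial units of a quantale. -/
def QuantaleStr.PU {Q : Type*} [CompleteLattice Q] (Qs : QuantaleStr Q) : Set Q :=
  {s | Qs.mul s (Qs.star s) ≤ Qs.e ∧ Qs.mul (Qs.star s) s ≤ Qs.e}

/-- An inverse quantal frame: a unital involutive quantale which is a frame,
has a stable support, and whose partial units join to the top. -/
structure InverseQuantalFrame (Q : Type*) [Order.Frame Q] extends toQuantale : QuantaleStr Q where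
  supp : Q → Q
  supp_le_e : ∀ a, supp a ≤ e
  supp_sSup : ∀ S : Set Q, supp (sSup S) = ⨆ a ∈ S, supp a
  supp_le_mul_star : ∀ a, supp a ≤ mul a (star a)
  le_supp_mul : ∀ a, a ≤ mul (supp a) a
  supp_stable : ∀ b a, b ≤ e → supp (mul b a) = mul b (supp a)
  sSup_PU : sSup {s | mul s (star s) ≤ e ∧ mul (star s) s ≤ e} = ⊤

/-- A left module over a quantale: a complete lattice with a unital associative
action preserving arbitrary joins in each variable. -/
structure QuantaleModule {Q : Type*} [CompleteLattice Q] (Qs : QuantaleStr Q)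
    (X : Type*) [CompleteLattice X] where
  act : Q → X → X
  act_mul : ∀ a b x, act (Qs.mul a b) x = act a (act b x)
  act_e : ∀ x, act Qs.e x = x
  sSup_act : ∀ (S : Set Q) (x : X), act (sSup S) x = ⨆ a ∈ S, act a x
  act_sSup : ∀ (a : Q) (S : Set X), act a (sSup S) = ⨆ x ∈ S, act a x

/-- A pre-Hilbert module over a quantale. -/
structure PreHilbertModule {Q : Type*} [CompleteLattice Q] (Qs : QuantaleStr Q)
    (X : Type*) [CompleteLattice X] extends QuantaleModule Qs X where
  inner : X → X → Q
  inner_act : ∀ a x y, inner (act a x) y = Qs.mul a (inner x y)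
  sSup_inner : ∀ (S : Set X) (y : X), inner (sSup S) y = ⨆ x ∈ S, inner x y
  inner_star : ∀ x y, inner x y = Qs.star (inner y x)

namespace PreHilbertModule

variable {Q X : Type*} [CompleteLattice Q] [CompleteLattice X] {Qs : QuantaleStr Q}

/-- A Hilbert section: `⟨x,s⟩s ≤ x` for all `x`. -/
def IsHilbertSection (H : PreHilbertModule Qs X) (s : X) : Prop :=
  ∀ x, H.act (H.inner x s) s ≤ x

/-- A regular element: `⟨s,s⟩s = s`. -/
def IsRegularSection (H : PreHilbertModule Qs X) (s : X) : Prop :=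
  H.act (H.inner s s) s = s

/-- A Hilbert basis: `x = ⋁_{t ∈ S} ⟨x,t⟩t` for all `x`. -/
def IsHilbertBasis (H : PreHilbertModule Qs X) (S : Set X) : Prop :=
  ∀ x, x = ⨆ t ∈ S, H.act (H.inner x t) t

/-- Non-degeneracy of the inner product. -/
def Nondegenerate (H : PreHilbertModule Qs X) : Prop :=
  ∀ x y, (∀ z, H.inner x z = H.inner y z) → x = y

end PreHilbertModule

/-- A `Q`-locale over an inverse quantal frame: a module which is a frame and
satisfies the anchor condition. -/
structure QLocale {Q : Type*} [Order.Frame Q] (Qf : InverseQuantalFrame Q)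
    (X : Type*) [Order.Frame X] extends QuantaleModule Qf.toQuantale X where
  anchor : ∀ b x, b ≤ Qf.e → act b x = act b ⊤ ⊓ x

/-- A `Q`-sheaf over an inverse quantal frame: a pre-Hilbert module which is a
frame, satisfies the anchor condition, and has a Hilbert basis. -/
structure QSheaf {Q : Type*} [Order.Frame Q] (Qf : InverseQuantalFrame Q)
    (X : Type*) [Order.Frame X] extends PreHilbertModule Qf.toQuantale X where
  anchor : ∀ b x, b ≤ Qf.e → act b x = act b ⊤ ⊓ x
  hasBasis : ∃ S : Set X, ∀ x, x = ⨆ t ∈ S, act (inner x t) t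

namespace QSheaf

variable {Q X : Type*} [Order.Frame Q] [Order.Frame X] {Qf : InverseQuantalFrame Q}

/-- The support `ς_X(x) = ⟨x,x⟩ ∧ e` of a `Q`-sheaf. -/
def sppX (H : QSheaf Qf X) (x : X) : Q := H.inner x x ⊓ Qf.e

/-- A local section: `ς_X(x)s = x` for all `x ≤ s`. -/
def IsLocalSection (H : QSheaf Qf X) (s : X) : Prop :=
  ∀ x ≤ s, H.act (H.sppX x) s = x

/-- A principal section: a local section with `⟨s,s⟩ ≤ e`. -/
def IsPrincipalSection (H : QSheaf Qf X) (s : X) : Prop :=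
  H.IsLocalSection s ∧ H.inner s s ≤ Qf.e

/-- A right local section: `x = s ∧ 1_Q·x` for all `x ≤ s`. -/
def IsRightLocalSection (H : QSheaf Qf X) (s : X) : Prop :=
  ∀ x ≤ s, x = s ⊓ H.act ⊤ x

/-- A local bisection: simultaneously a local section and a right local section. -/
def IsBisection (H : QSheaf Qf X) (s : X) : Prop :=
  H.IsLocalSection s ∧ H.IsRightLocalSection s

end QSheaf

section Stmt8Aux

theorem supArgMono {α β : Type*} [CompleteLattice α] [CompleteLattice β]
    (f : α → β) (hf : ∀ S : Set α, f (sSup S) = ⨆ a ∈ S, f a)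
    {a b : α} (h : a ≤ b) : f a ≤ f b := by
  have h1 : f b = ⨆ x ∈ ({a, b} : Set α), f x := by
    rw [← hf, sSup_pair, sup_eq_right.mpr h]
  rw [h1]
  exact le_iSup₂ (f := fun x (_ : x ∈ ({a, b} : Set α)) => f x) a (by simp)

theorem supArgSet {α β : Type*} [CompleteLattice α] [CompleteLattice β]
    (f : α → β) (hf : ∀ S : Set α, f (sSup S) = ⨆ a ∈ S, f a)
    {γ : Type*} (T : Set γ) (g : γ → α) :
    f (⨆ a ∈ T, g a) = ⨆ a ∈ T, f (g a) := by
  rw [← sSup_image, hf, iSup_image]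

variable {Q : Type*} [Order.Frame Q] {Qf : InverseQuantalFrame Q}

theorem q_mul_mono {a b c d : Q} (h1 : a ≤ b) (h2 : c ≤ d) :
    Qf.mul a c ≤ Qf.mul b d :=
  (supArgMono (fun z => Qf.mul z c) (fun S => Qf.sSup_mul S c) h1).trans
    (supArgMono (fun z => Qf.mul b z) (fun S => Qf.mul_sSup b S) h2)

theorem q_star_mono {a b : Q} (h : a ≤ b) : Qf.star a ≤ Qf.star b :=
  supArgMono Qf.star Qf.star_sSup h

theorem q_supp_mono {a b : Q} (h : a ≤ b) : Qf.supp a ≤ Qf.supp b :=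
  supArgMono Qf.supp Qf.supp_sSup h

theorem q_star_e : Qf.star Qf.e = Qf.e := by
  have h : ∀ a : Q, Qf.mul a (Qf.star Qf.e) = a := by
    intro a
    have h1 := Qf.star_mul Qf.e (Qf.star a)
    rw [Qf.e_mul, Qf.star_star] at h1
    exact h1.symm
  have h2 := h Qf.e
  rw [Qf.e_mul] at h2
  exact h2

theorem q_supp_e : Qf.supp Qf.e = Qf.e := by
  refine le_antisymm (Qf.supp_le_e _) ?_
  have h := Qf.le_supp_mul Qf.e
  rwa [Qf.mul_e] at h

theorem q_supp_of_le_e {b : Q} (hb : b ≤ Qf.e) : Qf.supp b = b := by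
  have h := Qf.supp_stable b Qf.e hb
  rwa [Qf.mul_e, q_supp_e, Qf.mul_e] at h

theorem q_star_of_le_e {b : Q} (hb : b ≤ Qf.e) : Qf.star b = b := by
  have hb' : ∀ c : Q, c ≤ Qf.e → c ≤ Qf.star c := by
    intro c hc
    calc c = Qf.supp c := (q_supp_of_le_e hc).symm
      _ ≤ Qf.mul c (Qf.star c) := Qf.supp_le_mul_star c
      _ ≤ Qf.mul Qf.e (Qf.star c) := q_mul_mono hc le_rfl
      _ = Qf.star c := Qf.e_mul _
  have h2 : Qf.star b ≤ Qf.e := by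
    have h3 := q_star_mono (Qf := Qf) hb
    rwa [q_star_e] at h3
  refine le_antisymm ?_ (hb' b hb)
  have h3 := hb' (Qf.star b) h2
  rwa [Qf.star_star] at h3

theorem q_le_mul_self {b : Q} (hb : b ≤ Qf.e) : b ≤ Qf.mul b b := by
  have h := Qf.supp_le_mul_star b
  rw [q_star_of_le_e hb] at h
  exact (q_supp_of_le_e hb).symm.trans_le h

theorem q_mul_le_left {b c : Q} (hc : c ≤ Qf.e) : Qf.mul b c ≤ b :=
  (q_mul_mono le_rfl hc).trans_eq (Qf.mul_e b)

theorem q_le_mul_supp_star (a : Q) : a ≤ Qf.mul a (Qf.supp (Qf.star a)) := by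
  have h1 := Qf.le_supp_mul (Qf.star a)
  have h2 := q_star_mono (Qf := Qf) h1
  rw [Qf.star_mul, Qf.star_star, q_star_of_le_e (Qf.supp_le_e _)] at h2
  exact h2

theorem q_supp_pu {s : Q} (h1 : Qf.mul s (Qf.star s) ≤ Qf.e) :
    Qf.supp s = Qf.mul s (Qf.star s) := by
  refine le_antisymm (Qf.supp_le_mul_star s) ?_
  calc Qf.mul s (Qf.star s)
      ≤ Qf.mul (Qf.mul (Qf.supp s) s) (Qf.star s) := q_mul_mono (Qf.le_supp_mul s) le_rfl
    _ = Qf.mul (Qf.supp s) (Qf.mul s (Qf.star s)) := Qf.mul_assoc _ _ _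
    _ ≤ Qf.supp s := q_mul_le_left h1

theorem q_star_pu {s : Q} (h1 : Qf.mul s (Qf.star s) ≤ Qf.e) :
    Qf.star s = Qf.mul (Qf.star s) (Qf.mul s (Qf.star s)) := by
  refine le_antisymm ?_ (q_mul_le_left h1)
  have h := q_le_mul_supp_star (Qf := Qf) (Qf.star s)
  rwa [Qf.star_star, q_supp_pu h1] at h

theorem q_decomp (r : Q) :
    r = sSup {s : Q |
      (Qf.mul s (Qf.star s) ≤ Qf.e ∧ Qf.mul (Qf.star s) s ≤ Qf.e) ∧ s ≤ r} := by
  refine le_antisymm ?_ (sSup_le fun s hs => hs.2)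
  have h1 : r = r ⊓ sSup {s : Q | Qf.mul s (Qf.star s) ≤ Qf.e ∧ Qf.mul (Qf.star s) s ≤ Qf.e} := by
    rw [Qf.sSup_PU, inf_top_eq]
  conv_lhs => rw [h1]
  rw [inf_sSup_eq]
  refine iSup₂_le fun s hs => le_sSup ⟨⟨?_, ?_⟩, inf_le_left⟩
  · exact (q_mul_mono inf_le_right (q_star_mono inf_le_right)).trans hs.1
  · exact (q_mul_mono (q_star_mono inf_le_right) inf_le_right).trans hs.2

variable {X : Type*} [Order.Frame X] (H : QSheaf Qf X)

theorem h_act_monoQ {a b : Q} (x : X) (h : a ≤ b) : H.act a x ≤ H.act b x :=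
  supArgMono (fun z => H.act z x) (fun S => H.sSup_act S x) h

theorem h_act_monoX (a : Q) {x y : X} (h : x ≤ y) : H.act a x ≤ H.act a y :=
  supArgMono (fun z => H.act a z) (fun S => H.act_sSup a S) h

theorem h_inner_monoL {x y : X} (z : X) (h : x ≤ y) : H.inner x z ≤ H.inner y z :=
  supArgMono (fun w => H.inner w z) (fun S => H.sSup_inner S z) h

theorem h_inner_monoR (x : X) {y z : X} (h : y ≤ z) : H.inner x y ≤ H.inner x z := by
  rw [H.inner_star x y, H.inner_star x z]
  exact q_star_mono (h_inner_monoL H x h)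

theorem h_inner_act_right (x : X) (a : Q) (y : X) :
    H.inner x (H.act a y) = Qf.mul (H.inner x y) (Qf.star a) := by
  rw [H.inner_star x (H.act a y), H.inner_act, Qf.star_mul, ← H.inner_star]

theorem h_inner_sSup_right (x : X) (T : Set X) :
    H.inner x (sSup T) = ⨆ y ∈ T, H.inner x y := by
  rw [H.inner_star x (sSup T), H.sSup_inner]
  rw [supArgSet Qf.star Qf.star_sSup T (fun y => H.inner y x)]
  exact iSup_congr fun y => iSup_congr fun _ => (H.inner_star x y).symm

theorem h_section {S : Set X} (hS : ∀ x, x = ⨆ t ∈ S, H.act (H.inner x t) t)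
    {u : X} (hu : u ∈ S) (z : X) : H.act (H.inner z u) u ≤ z := by
  conv_rhs => rw [hS z]
  exact le_iSup₂ (f := fun t (_ : t ∈ S) => H.act (H.inner z t) t) u hu

theorem h_le_act_sppX {S : Set X} (hS : ∀ x, x = ⨆ t ∈ S, H.act (H.inner x t) t)
    (x : X) : x ≤ H.act (H.sppX x) x := by
  conv_lhs => rw [hS x]
  refine iSup₂_le fun t ht => ?_
  have hsec := h_section H hS ht x
  have h1 : Qf.supp (H.inner x t) ≤ H.sppX x := by
    refine le_inf ?_ (Qf.supp_le_e _)
    calc Qf.supp (H.inner x t)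
        ≤ Qf.mul (H.inner x t) (Qf.star (H.inner x t)) := Qf.supp_le_mul_star _
      _ = Qf.mul (H.inner x t) (H.inner t x) := by rw [← H.inner_star t x]
      _ = H.inner (H.act (H.inner x t) t) x := (H.inner_act _ _ _).symm
      _ ≤ H.inner x x := h_inner_monoL H x hsec
  calc H.act (H.inner x t) t
      ≤ H.act (Qf.mul (H.sppX x) (H.inner x t)) t :=
        h_act_monoQ H t ((Qf.le_supp_mul _).trans (q_mul_mono h1 le_rfl))
    _ = H.act (H.sppX x) (H.act (H.inner x t) t) := H.act_mul _ _ _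
    _ ≤ H.act (H.sppX x) x := h_act_monoX H _ hsec

theorem h_supp_inner_le_sppX {S : Set X} (hS : ∀ x, x = ⨆ t ∈ S, H.act (H.inner x t) t)
    (x y : X) : Qf.supp (H.inner x y) ≤ H.sppX x := by
  have h1 : H.inner x y ≤ Qf.mul (H.sppX x) (H.inner x y) := by
    calc H.inner x y
        ≤ H.inner (H.act (H.sppX x) x) y := h_inner_monoL H y (h_le_act_sppX H hS x)
      _ = Qf.mul (H.sppX x) (H.inner x y) := H.inner_act _ _ _
  calc Qf.supp (H.inner x y)
      ≤ Qf.supp (Qf.mul (H.sppX x) (H.inner x y)) := q_supp_mono h1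
    _ = Qf.mul (H.sppX x) (Qf.supp (H.inner x y)) := Qf.supp_stable _ _ inf_le_right
    _ ≤ Qf.mul (H.sppX x) Qf.e := q_mul_mono le_rfl (Qf.supp_le_e _)
    _ = H.sppX x := Qf.mul_e _

end Stmt8Aux

/-- For a `Q`-`R`-bimodule `X` which is a `Q`-sheaf, has a right
`R`-action with the right anchor condition, is open as a right `R`-locale, and
satisfies the invariance identities, one has `⟨xr*, y⟩ = ⟨x, yr⟩`. -/
theorem stmt8 {Q R X : Type*} [Order.Frame Q] [Order.Frame R] [Order.Frame X]
    (Qf : InverseQuantalFrame Q) (Rf : InverseQuantalFrame R)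
    (H : QSheaf Qf X)
    -- right R-action:
    (ract : X → R → X)
    (ract_mul : ∀ x r r', ract x (Rf.mul r r') = ract (ract x r) r')
    (ract_e : ∀ x, ract x Rf.e = x)
    (sSup_ract : ∀ (S : Set X) (r : R), ract (sSup S) r = ⨆ x ∈ S, ract x r)
    (ract_sSup : ∀ (x : X) (S : Set R), ract x (sSup S) = ⨆ r ∈ S, ract x r)
    (right_anchor : ∀ c x, c ≤ Rf.e → ract x c = ract ⊤ c ⊓ x)
    (bimodule : ∀ a x r, ract (H.act a x) r = H.act a (ract x r))
    -- X is open as a right R-locale: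
    (σ' : X → R)
    (σ'_mono : Monotone σ')
    (σ'_le : ∀ x, σ' x ≤ Rf.e)
    (σ'_ract : ∀ x c, c ≤ Rf.e → σ' (ract x c) = σ' x ⊓ c)
    (ract_σ' : ∀ x, ract x (σ' x) = x)
    -- invariance identities:
    (inv1 : ∀ a x, σ' (H.act a x) = σ' (H.act (Qf.supp (Qf.star a)) x))
    (inv2 : ∀ r x, H.sppX (ract x r) = H.sppX (ract x (Rf.supp r))) :
    ∀ (r : R) (x y : X),
      H.inner (ract x (Rf.star r)) y = H.inner x (ract y r) := by
  obtain ⟨S, hS⟩ := H.hasBasis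
  have ract_monoX : ∀ (r : R) (x y : X), x ≤ y → ract x r ≤ ract y r :=
    fun r x y h => supArgMono (fun z => ract z r) (fun T => sSup_ract T r) h
  have ract_monoR : ∀ (x : X) (r r' : R), r ≤ r' → ract x r ≤ ract x r' :=
    fun x r r' h => supArgMono (ract x) (ract_sSup x) h
  -- core inequality, against a basis element
  have core : ∀ s : R, Rf.mul s (Rf.star s) ≤ Rf.e → Rf.mul (Rf.star s) s ≤ Rf.e →
      ∀ x : X, ∀ u ∈ S, H.inner (ract x (Rf.star s)) u ≤ H.inner x (ract u s) := by
    intro s hs1 hs2 x u hu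
    have hss : Rf.star s = Rf.mul (Rf.star s) (Rf.mul s (Rf.star s)) := q_star_pu hs1
    set w := ract x (Rf.star s) with hw
    have hsec_u : ∀ z : X, H.act (H.inner z u) u ≤ z := h_section H hS hu
    have hbe : Qf.supp (H.inner u w) ≤ Qf.e := Qf.supp_le_e _
    have hbu_u : H.act (Qf.supp (H.inner u w)) u ≤ u := by
      rw [H.anchor _ u hbe]; exact inf_le_right
    have hbu_q : H.act (Qf.supp (H.inner u w)) u
        ≤ ract (H.act (H.inner u w) x) (Rf.star s) := by
      have h1 : Qf.supp (H.inner u w) ≤ Qf.mul (H.inner u w) (H.inner w u) := by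
        have h2 := Qf.supp_le_mul_star (H.inner u w)
        rwa [← H.inner_star w u] at h2
      calc H.act (Qf.supp (H.inner u w)) u
          ≤ H.act (Qf.mul (H.inner u w) (H.inner w u)) u := h_act_monoQ H u h1
        _ = H.act (H.inner u w) (H.act (H.inner w u) u) := H.act_mul _ _ _
        _ ≤ H.act (H.inner u w) w := h_act_monoX H _ (hsec_u w)
        _ = ract (H.act (H.inner u w) x) (Rf.star s) := by
            rw [hw]; exact (bimodule _ x _).symm
    have hσ : σ' (H.act (Qf.supp (H.inner u w)) u) ≤ Rf.mul s (Rf.star s) := by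
      have h1 : ract (H.act (H.inner u w) x) (Rf.star s)
          = ract (ract (H.act (H.inner u w) x) (Rf.star s)) (Rf.mul s (Rf.star s)) := by
        conv_lhs => rw [hss]
        rw [ract_mul]
      calc σ' (H.act (Qf.supp (H.inner u w)) u)
          ≤ σ' (ract (H.act (H.inner u w) x) (Rf.star s)) := σ'_mono hbu_q
        _ ≤ Rf.mul s (Rf.star s) := by
            rw [h1, σ'_ract _ _ hs1]; exact inf_le_right
    have hbu_uc : H.act (Qf.supp (H.inner u w)) u ≤ ract u (Rf.mul s (Rf.star s)) := by
      calc H.act (Qf.supp (H.inner u w)) u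
          = ract (H.act (Qf.supp (H.inner u w)) u)
              (σ' (H.act (Qf.supp (H.inner u w)) u)) := (ract_σ' _).symm
        _ ≤ ract (H.act (Qf.supp (H.inner u w)) u) (Rf.mul s (Rf.star s)) :=
            ract_monoR _ _ _ hσ
        _ ≤ ract u (Rf.mul s (Rf.star s)) := ract_monoX _ _ _ hbu_u
    have hb_uu : Qf.supp (H.inner u w) ≤ H.inner u u :=
      (h_supp_inner_le_sppX H hS u w).trans inf_le_left
    have hb_uc : Qf.supp (H.inner u w)
        ≤ H.inner (ract u (Rf.mul s (Rf.star s))) (ract u (Rf.mul s (Rf.star s))) := by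
      have h4 : H.inner (H.act (Qf.supp (H.inner u w)) u) (H.act (Qf.supp (H.inner u w)) u)
          = Qf.mul (Qf.supp (H.inner u w))
              (Qf.mul (H.inner u u) (Qf.supp (H.inner u w))) := by
        rw [H.inner_act, h_inner_act_right, q_star_of_le_e hbe]
      calc Qf.supp (H.inner u w)
          ≤ Qf.mul (Qf.supp (H.inner u w)) (Qf.supp (H.inner u w)) := q_le_mul_self hbe
        _ ≤ Qf.mul (Qf.supp (H.inner u w))
            (Qf.mul (Qf.supp (H.inner u w)) (Qf.supp (H.inner u w))) :=
            q_mul_mono le_rfl (q_le_mul_self hbe)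
        _ ≤ Qf.mul (Qf.supp (H.inner u w))
            (Qf.mul (H.inner u u) (Qf.supp (H.inner u w))) :=
            q_mul_mono le_rfl (q_mul_mono hb_uu le_rfl)
        _ = H.inner (H.act (Qf.supp (H.inner u w)) u)
            (H.act (Qf.supp (H.inner u w)) u) := h4.symm
        _ ≤ H.inner (ract u (Rf.mul s (Rf.star s)))
            (ract u (Rf.mul s (Rf.star s))) :=
            (h_inner_monoL H _ hbu_uc).trans (h_inner_monoR H _ hbu_uc)
    have hspp : Qf.supp (H.inner u w) ≤ H.inner (ract u s) (ract u s) := by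
      have h5 : H.sppX (ract u s) = H.sppX (ract u (Rf.mul s (Rf.star s))) := by
        rw [inv2 s u, q_supp_pu hs1]
      have h6 : Qf.supp (H.inner u w) ≤ H.sppX (ract u (Rf.mul s (Rf.star s))) :=
        le_inf hb_uc hbe
      rw [← h5] at h6
      exact h6.trans inf_le_left
    have ha_x : H.act (H.inner w u) (ract u s) ≤ x := by
      calc H.act (H.inner w u) (ract u s)
          = ract (H.act (H.inner w u) u) s := (bimodule _ _ _).symm
        _ ≤ ract w s := ract_monoX _ _ _ (hsec_u w)
        _ = ract x (Rf.mul (Rf.star s) s) := by rw [hw, ← ract_mul]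
        _ ≤ x := by rw [right_anchor _ _ hs2]; exact inf_le_right
    calc H.inner w u
        ≤ Qf.mul (H.inner w u) (Qf.supp (Qf.star (H.inner w u))) := q_le_mul_supp_star _
      _ = Qf.mul (H.inner w u) (Qf.supp (H.inner u w)) := by rw [← H.inner_star u w]
      _ ≤ Qf.mul (H.inner w u) (H.inner (ract u s) (ract u s)) := q_mul_mono le_rfl hspp
      _ = H.inner (H.act (H.inner w u) (ract u s)) (ract u s) := (H.inner_act _ _ _).symm
      _ ≤ H.inner x (ract u s) := h_inner_monoL H _ ha_x
  -- one-sided inequality, for partial units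
  have key_le : ∀ s : R, Rf.mul s (Rf.star s) ≤ Rf.e → Rf.mul (Rf.star s) s ≤ Rf.e →
      ∀ x y : X, H.inner (ract x (Rf.star s)) y ≤ H.inner x (ract y s) := by
    intro s hs1 hs2 x y
    have e1 : H.inner (ract x (Rf.star s)) (⨆ u ∈ S, H.act (H.inner y u) u)
        = ⨆ u ∈ S, Qf.mul (H.inner (ract x (Rf.star s)) u) (Qf.star (H.inner y u)) := by
      rw [supArgSet (H.inner (ract x (Rf.star s)))
        (fun T => h_inner_sSup_right H _ T) S (fun u => H.act (H.inner y u) u)]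
      exact iSup_congr fun u => iSup_congr fun _ => h_inner_act_right H _ _ _
    have e2 : H.inner x (ract y s)
        = ⨆ u ∈ S, Qf.mul (H.inner x (ract u s)) (Qf.star (H.inner y u)) := by
      conv_lhs => rw [hS y]
      rw [supArgSet (fun z => ract z s) (fun T => sSup_ract T s) S
        (fun u => H.act (H.inner y u) u)]
      rw [supArgSet (H.inner x) (fun T => h_inner_sSup_right H x T) S
        (fun u => ract (H.act (H.inner y u) u) s)]
      refine iSup_congr fun u => iSup_congr fun _ => ?_
      rw [bimodule, h_inner_act_right]
    calc H.inner (ract x (Rf.star s)) y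
        = H.inner (ract x (Rf.star s)) (⨆ u ∈ S, H.act (H.inner y u) u) := by
          conv_lhs => rw [hS y]
      _ = ⨆ u ∈ S, Qf.mul (H.inner (ract x (Rf.star s)) u) (Qf.star (H.inner y u)) := e1
      _ ≤ ⨆ u ∈ S, Qf.mul (H.inner x (ract u s)) (Qf.star (H.inner y u)) :=
          iSup₂_mono fun u hu => q_mul_mono (core s hs1 hs2 x u hu) le_rfl
      _ = H.inner x (ract y s) := e2.symm
  -- equality for partial units
  have key_eq : ∀ s : R, Rf.mul s (Rf.star s) ≤ Rf.e → Rf.mul (Rf.star s) s ≤ Rf.e →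
      ∀ x y : X, H.inner (ract x (Rf.star s)) y = H.inner x (ract y s) := by
    intro s hs1 hs2 x y
    refine le_antisymm (key_le s hs1 hs2 x y) ?_
    have hs1' : Rf.mul (Rf.star s) (Rf.star (Rf.star s)) ≤ Rf.e := by
      rw [Rf.star_star]; exact hs2
    have hs2' : Rf.mul (Rf.star (Rf.star s)) (Rf.star s) ≤ Rf.e := by
      rw [Rf.star_star]; exact hs1
    have h := key_le (Rf.star s) hs1' hs2' y x
    rw [Rf.star_star] at h
    have h2 := q_star_mono (Qf := Qf) h
    rwa [← H.inner_star x (ract y s), ← H.inner_star (ract x (Rf.star s)) y] at h2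
  -- assemble, writing r as a join of partial units
  intro r x y
  have hd := q_decomp (Qf := Rf) r
  set P := {s : R | (Rf.mul s (Rf.star s) ≤ Rf.e ∧ Rf.mul (Rf.star s) s ≤ Rf.e) ∧ s ≤ r}
    with hP
  have l1 : H.inner (ract x (Rf.star r)) y = ⨆ s ∈ P, H.inner (ract x (Rf.star s)) y := by
    conv_lhs => rw [hd]
    rw [Rf.star_sSup,
      supArgSet (ract x) (ract_sSup x) P Rf.star,
      supArgSet (fun z => H.inner z y) (fun T => H.sSup_inner T y) P
        (fun s => ract x (Rf.star s))]
  have l2 : H.inner x (ract y r) = ⨆ s ∈ P, H.inner x (ract y s) := by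
    conv_lhs => rw [hd]
    rw [ract_sSup y P,
      supArgSet (H.inner x) (fun T => h_inner_sSup_right H x T) P (fun s => ract y s)]
  rw [l1, l2]
  exact iSup_congr fun s => iSup_congr fun hs => key_eq s hs.1.1 hs.1.2 x y
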